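/- Let y_r, y_f ∈ ℝ, v_r, v_f ≥ 0, a ≥ 0, ρ ≥ 0 and 0 < b_min ≤ b_max. Let F be the braking trajectory with data (y_f, v_f, b_max) and let R be the accelerate-then-brake trajectory with data (y_r, v_r, a, ρ, b_min). Then for every t ≥ 0, F(t) − R(t) ≥ min( y_f − y_r , (y_f + v_f²/(2·b_max)) − (y_r + v_r·ρ + (a/2)·ρ² + (v_r + a·ρ)²/(2·b_min)) ). That is, the gap between the two worst-case trajectories attains its minimum either initially or after both vehicles have stopped. -/

import Mathlib

/-- The braking trajectory: position at time `t` of a vehicle starting at `x₀`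
with speed `v`, braking at constant rate `b` until stopped (at time `v/b`). -/
noncomputable def brk (x₀ v b : ℝ) (t : ℝ) : ℝ :=
  if t ≤ v / b then x₀ + v * t - (b / 2) * t ^ 2 else x₀ + v ^ 2 / (2 * b)

/-- The accelerate-then-brake trajectory: position at time `t` of a vehicle
starting at `x₀` with speed `v`, accelerating at rate `a` for time `τ`,
then braking at rate `b` until stopped, remaining stopped afterwards. -/
noncomputable def atb (x₀ v a τ b : ℝ) (t : ℝ) : ℝ :=
  if t ≤ τ then x₀ + v * t + (a / 2) * t ^ 2
  else if t ≤ τ + (v + a * τ) / b then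
    (x₀ + v * τ + (a / 2) * τ ^ 2) + (v + a * τ) * (t - τ) - (b / 2) * (t - τ) ^ 2
  else (x₀ + v * τ + (a / 2) * τ ^ 2) + (v + a * τ) ^ 2 / (2 * b)

set_option maxHeartbeats 800000 in
theorem gap_min_at_start_or_stopped (y_r y_f v_r v_f a ρ b_min b_max : ℝ)
    (hvr : 0 ≤ v_r) (hvf : 0 ≤ v_f) (ha : 0 ≤ a) (hρ : 0 ≤ ρ)
    (hbmin : 0 < b_min) (hb : b_min ≤ b_max) :
    ∀ t : ℝ, 0 ≤ t →
      min (y_f - y_r)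
          ((y_f + v_f ^ 2 / (2 * b_max)) -
            (y_r + v_r * ρ + (a / 2) * ρ ^ 2 + (v_r + a * ρ) ^ 2 / (2 * b_min)))
        ≤ brk y_f v_f b_max t - atb y_r v_r a ρ b_min t := by
  intro t ht
  have hbmax : 0 < b_max := lt_of_lt_of_le hbmin hb
  have hv1 : 0 ≤ v_r + a * ρ := by positivity
  unfold brk atb
  split_ifs with h1 h2 h3 h2 h3
  · -- t ≤ v_f/b_max, t ≤ ρ
    have hbt : b_max * t ≤ v_f := by
      rw [le_div_iff₀ hbmax] at h1; linarith
    rcases le_or_gt ((b_max + a) * t) (v_f - v_r) with hd | hd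
    · refine le_trans (min_le_left _ _) ?_
      nlinarith [mul_nonneg ht (by linarith : (0:ℝ) ≤ v_f - v_r - (b_max + a) * t),
        mul_nonneg (by linarith : (0:ℝ) ≤ b_max + a) (sq_nonneg t)]
    · refine le_trans (min_le_right _ _) ?_
      have hX : 0 ≤ v_f - b_max * t := by linarith
      have hXY : v_f - b_max * t ≤ v_r + a * ρ := by
        have := mul_le_mul_of_nonneg_left h2 ha
        linarith
      have hsq : (v_f - b_max * t) ^ 2 ≤ (v_r + a * ρ) ^ 2 :=
        pow_le_pow_left₀ hX hXY 2
      have hdiv : (v_f - b_max * t) ^ 2 / (2 * b_max) ≤ (v_r + a * ρ) ^ 2 / (2 * b_min) :=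
        div_le_div₀ (by positivity) hsq (by linarith) (by linarith)
      have key : v_f * t - b_max / 2 * t ^ 2
          = v_f ^ 2 / (2 * b_max) - (v_f - b_max * t) ^ 2 / (2 * b_max) := by
        field_simp; ring
      nlinarith [hdiv, key, mul_le_mul_of_nonneg_left h2 hvr,
        mul_le_mul_of_nonneg_left (pow_le_pow_left₀ ht h2 2) ha]
  · -- t ≤ v_f/b_max, ρ < t ≤ ρ + v1/b_min
    have hbt : b_max * t ≤ v_f := by
      rw [le_div_iff₀ hbmax] at h1; linarith
    have hρt : ρ < t := not_le.1 h2
    have hs : 0 ≤ t - ρ := by linarith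
    have hY : b_min * (t - ρ) ≤ v_r + a * ρ := by
      have h3' : t - ρ ≤ (v_r + a * ρ) / b_min := by linarith
      rw [le_div_iff₀ hbmin] at h3'; linarith
    rcases le_or_gt (v_r + a * ρ - b_min * (t - ρ)) (v_f - b_max * t) with hd | hd
    · refine le_trans (min_le_left _ _) ?_
      have hd2ρ : 0 ≤ v_f - b_max * ρ - (v_r + a * ρ) := by
        nlinarith [mul_nonneg (by linarith : (0:ℝ) ≤ b_max - b_min) hs]
      nlinarith [mul_nonneg hρ hd2ρ,
        mul_nonneg hs (by linarith : (0:ℝ) ≤ v_f - b_max * t - (v_r + a * ρ - b_min * (t - ρ))),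
        mul_nonneg (by linarith : (0:ℝ) ≤ b_max + a) (sq_nonneg ρ),
        mul_nonneg (by linarith : (0:ℝ) ≤ b_max - b_min) (sq_nonneg (t - ρ))]
    · refine le_trans (min_le_right _ _) ?_
      have hX : 0 ≤ v_f - b_max * t := by linarith
      have hsq : (v_f - b_max * t) ^ 2 ≤ (v_r + a * ρ - b_min * (t - ρ)) ^ 2 :=
        pow_le_pow_left₀ hX (by linarith) 2
      have hdiv : (v_f - b_max * t) ^ 2 / (2 * b_max)
          ≤ (v_r + a * ρ - b_min * (t - ρ)) ^ 2 / (2 * b_min) :=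
        div_le_div₀ (by positivity) hsq (by linarith) (by linarith)
      have key1 : v_f * t - b_max / 2 * t ^ 2
          = v_f ^ 2 / (2 * b_max) - (v_f - b_max * t) ^ 2 / (2 * b_max) := by
        field_simp; ring
      have key2 : (v_r + a * ρ) * (t - ρ) - b_min / 2 * (t - ρ) ^ 2
          = (v_r + a * ρ) ^ 2 / (2 * b_min)
            - (v_r + a * ρ - b_min * (t - ρ)) ^ 2 / (2 * b_min) := by
        field_simp; ring
      linarith [hdiv]
  · -- t ≤ v_f/b_max, t > ρ + v1/b_min : rear already stopped
    have hbt : b_max * t ≤ v_f := by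
      rw [le_div_iff₀ hbmax] at h1; linarith
    have hρt : ρ < t := not_le.1 h2
    set q : ℝ := (v_r + a * ρ) / b_min with hqdef
    have hq : b_min * q = v_r + a * ρ := by
      rw [hqdef]; field_simp
    have hq0 : 0 ≤ q := div_nonneg hv1 hbmin.le
    have hqt : ρ + q < t := not_le.1 h3
    have hqq : (v_r + a * ρ) ^ 2 / (2 * b_min) = (v_r + a * ρ) * q / 2 := by
      rw [← hq]; field_simp
    refine le_trans (min_le_left _ _) ?_
    have hd : 0 ≤ v_f - b_max * t := by linarith
    have hdT : 0 ≤ v_f - b_max * (ρ + q) := by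
      have := mul_le_mul_of_nonneg_left hqt.le hbmax.le
      linarith
    have hd1ρ : 0 ≤ v_f - b_max * ρ - (v_r + a * ρ) := by
      nlinarith [mul_nonneg (by linarith : (0:ℝ) ≤ b_max - b_min) hq0]
    have hvq : (v_r + a * ρ) * q = b_min * q ^ 2 := by rw [← hq]; ring
    rw [hqq]
    have g1 : 0 ≤ v_f * ρ - b_max / 2 * ρ ^ 2 - v_r * ρ - a / 2 * ρ ^ 2 := by
      nlinarith [mul_nonneg hρ hd1ρ,
        mul_nonneg (by linarith : (0:ℝ) ≤ b_max + a) (sq_nonneg ρ)]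
    have g2 : 0 ≤ v_f * q - b_max * ρ * q - b_max / 2 * q ^ 2 - b_min / 2 * q ^ 2 := by
      nlinarith [mul_nonneg hq0 hdT,
        mul_nonneg (by linarith : (0:ℝ) ≤ b_max - b_min) (sq_nonneg q)]
    have g3 : 0 ≤ v_f * (t - ρ - q) - b_max / 2 * t ^ 2 + b_max / 2 * ρ ^ 2
        + b_max * ρ * q + b_max / 2 * q ^ 2 := by
      nlinarith [mul_nonneg (by linarith : (0:ℝ) ≤ t - ρ - q) hd,
        mul_nonneg hbmax.le (sq_nonneg (t - ρ - q))]
    linarith [g1, g2, g3, hvq]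
  · -- t > v_f/b_max, t ≤ ρ
    refine le_trans (min_le_right _ _) ?_
    have hpos : 0 ≤ (v_r + a * ρ) ^ 2 / (2 * b_min) := by positivity
    nlinarith [hpos, mul_le_mul_of_nonneg_left h2 hvr,
      mul_le_mul_of_nonneg_left (pow_le_pow_left₀ ht h2 2) ha]
  · -- t > v_f/b_max, ρ < t ≤ ρ + v1/b_min
    refine le_trans (min_le_right _ _) ?_
    have key2 : (v_r + a * ρ) * (t - ρ) - b_min / 2 * (t - ρ) ^ 2
        = (v_r + a * ρ) ^ 2 / (2 * b_min)
          - (v_r + a * ρ - b_min * (t - ρ)) ^ 2 / (2 * b_min) := by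
      field_simp; ring
    have hpos : 0 ≤ (v_r + a * ρ - b_min * (t - ρ)) ^ 2 / (2 * b_min) := by positivity
    linarith
  · -- both stopped
    exact le_trans (min_le_right _ _) (le_of_eq (by ring))
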